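/- (Key algebraic identity in the stochastic equation of motion) With 𝒱^μ := iλ²∂^μ ln φ + (e/m₀)A^μ, 𝒱̂^μ := 𝒱^μ + (iλ²/2)∂^μ, 𝔇_τ := 𝒱̂^ν∂_ν, and F^{μν} := ∂^μA^ν − ∂^νA^μ, one has the operator identity (valid pointwise where φ ≠ 0, with φ ∈ C³, A ∈ C²): 𝔇_τ 𝒱^μ + (e/m₀) 𝒱̂_ν F^{μν} = 𝒱̂_ν ∂^μ 𝒱^ν. -/

import Mathlib

open Complex

noncomputable section

/-- Spacetime `ℝ⁴`. -/
abbrev Spt := Fin 4 → ℝ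

/-- Components of the Minkowski metric `diag(+1,-1,-1,-1)`. -/
def η (μ : Fin 4) : ℝ := if μ = 0 then 1 else -1

def pdC (μ : Fin 4) (f : Spt → ℂ) (x : Spt) : ℂ := fderiv ℝ f x (Pi.single μ 1)

def pdR (μ : Fin 4) (f : Spt → ℝ) (x : Spt) : ℝ := fderiv ℝ f x (Pi.single μ 1)

/-- The d'Alembertian `∂^μ∂_μ f`. -/
def boxC (f : Spt → ℂ) (x : Spt) : ℂ :=
  ∑ μ : Fin 4, (η μ : ℂ) * pdC μ (fun y => pdC μ f y) x

/-- The raised complex velocity `𝒱^μ = iλ²∂^μ ln φ + (e/m₀)A^μ`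
(here `A μ` are the lowered components `A_μ`, so `A^μ = η^{μμ}A_μ`). -/
def cVelUp (lam e m₀ : ℝ) (A : Fin 4 → Spt → ℝ) (φ : Spt → ℂ) (μ : Fin 4) (x : Spt) : ℂ :=
  I * (lam : ℂ) ^ 2 * ((η μ : ℂ) * pdC μ φ x) / φ x + ((e / m₀ : ℝ) : ℂ) * ((η μ : ℝ) * A μ x)

/-- `𝔇_τ = 𝒱̂^μ∂_μ = 𝒱^μ∂_μ + (iλ²/2)∂^μ∂_μ`. -/
def Dtau (lam e m₀ : ℝ) (A : Fin 4 → Spt → ℝ) (φ : Spt → ℂ) (f : Spt → ℂ) (x : Spt) : ℂ :=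
  (∑ ν : Fin 4, cVelUp lam e m₀ A φ ν x * pdC ν f x)
    + I * (lam : ℂ) ^ 2 / 2 * boxC f x

/-- The contraction `𝒱̂_ν X^ν = 𝒱_ν X^ν + (iλ²/2)∂_ν X^ν`, for `X` given by its raised
components. -/
def hatContr (lam e m₀ : ℝ) (A : Fin 4 → Spt → ℝ) (φ : Spt → ℂ)
    (X : Fin 4 → Spt → ℂ) (x : Spt) : ℂ :=
  ∑ ν : Fin 4, ((η ν : ℂ) * cVelUp lam e m₀ A φ ν x * X ν x
    + I * (lam : ℂ) ^ 2 / 2 * pdC ν (X ν) x)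

/-- The raised field strength `F^{μν} = ∂^μA^ν − ∂^νA^μ`. -/
def FupL (A : Fin 4 → Spt → ℝ) (μ ν : Fin 4) (x : Spt) : ℝ :=
  η μ * η ν * (pdR μ (A ν) x - pdR ν (A μ) x)

/-- `iħ∂_μ f + e A_μ f`. -/
def Pop (hbar e : ℝ) (A : Fin 4 → Spt → ℝ) (μ : Fin 4) (f : Spt → ℂ) (x : Spt) : ℂ :=
  I * (hbar : ℂ) * pdC μ f x + (e : ℂ) * (A μ x) * f x

/-- The Klein-Gordon operator `(iħ∂_ν + eA_ν)(iħ∂^ν + eA^ν)φ`. -/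
def KGop (hbar e : ℝ) (A : Fin 4 → Spt → ℝ) (φ : Spt → ℂ) (x : Spt) : ℂ :=
  ∑ ν : Fin 4, (η ν : ℂ) * Pop hbar e A ν (fun y => Pop hbar e A ν φ y) x


lemma eta_sq (ν : Fin 4) : η ν * η ν = 1 := by unfold η; split <;> norm_num

lemma pdC_congr {f g : Spt → ℂ} {x : Spt} (h : f =ᶠ[nhds x] g) (μ : Fin 4) :
    pdC μ f x = pdC μ g x := by unfold pdC; rw [h.fderiv_eq]

lemma pdC_add {f g : Spt → ℂ} {x : Spt} (hf : DifferentiableAt ℝ f x)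
    (hg : DifferentiableAt ℝ g x) (μ : Fin 4) :
    pdC μ (fun y => f y + g y) x = pdC μ f x + pdC μ g x := by
  unfold pdC; rw [fderiv_fun_add hf hg]; simp

lemma pdC_const_mul {f : Spt → ℂ} {x : Spt} (hf : DifferentiableAt ℝ f x) (c : ℂ) (μ : Fin 4) :
    pdC μ (fun y => c * f y) x = c * pdC μ f x := by
  unfold pdC; rw [fderiv_const_mul hf c]; simp

lemma pdC_mul {f g : Spt → ℂ} {x : Spt} (hf : DifferentiableAt ℝ f x)
    (hg : DifferentiableAt ℝ g x) (μ : Fin 4) :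
    pdC μ (fun y => f y * g y) x = f x * pdC μ g x + g x * pdC μ f x := by
  unfold pdC; rw [fderiv_fun_mul hf hg]; simp

lemma pdC_inv {g : Spt → ℂ} {x : Spt} (hg : DifferentiableAt ℝ g x) (hx : g x ≠ 0) (μ : Fin 4) :
    pdC μ (fun y => (g y)⁻¹) x = -(pdC μ g x / g x ^ 2) := by
  unfold pdC
  have h1 : fderiv ℝ (fun y => (g y)⁻¹) x
      = (fderiv ℝ (fun z : ℂ => z⁻¹) (g x)).comp (fderiv ℝ g x) :=
    fderiv_comp x (differentiableAt_inv hx) hg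
  rw [h1]
  rw [show (fun z : ℂ => z⁻¹) = Inv.inv from rfl, fderiv_inv' hx]
  simp only [ContinuousLinearMap.coe_comp', Function.comp_apply,
    ContinuousLinearMap.neg_apply, ContinuousLinearMap.mulLeftRight_apply]
  rw [show (g x)⁻¹ * fderiv ℝ g x (Pi.single μ 1) * (g x)⁻¹
      = fderiv ℝ g x (Pi.single μ 1) / g x ^ 2 by rw [eq_div_iff (pow_ne_zero 2 hx), pow_two]; field_simp]

lemma pdC_div {f g : Spt → ℂ} {x : Spt} (hf : DifferentiableAt ℝ f x)
    (hg : DifferentiableAt ℝ g x) (hx : g x ≠ 0) (μ : Fin 4) :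
    pdC μ (fun y => f y / g y) x = (pdC μ f x * g x - f x * pdC μ g x) / g x ^ 2 := by
  simp only [div_eq_mul_inv]
  rw [pdC_mul (g := fun y => (g y)⁻¹) hf (hg.inv hx), pdC_inv hg hx]
  field_simp
  ring

lemma pdR_const_mul {f : Spt → ℝ} {x : Spt} (hf : DifferentiableAt ℝ f x) (c : ℝ) (μ : Fin 4) :
    pdR μ (fun y => c * f y) x = c * pdR μ f x := by
  unfold pdR; rw [fderiv_const_mul hf c]; simp

lemma pdC_ofReal {f : Spt → ℝ} {x : Spt} (hf : DifferentiableAt ℝ f x) (μ : Fin 4) :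
    pdC μ (fun y => ((f y : ℝ) : ℂ)) x = ((pdR μ f x : ℝ) : ℂ) := by
  unfold pdC pdR
  have : HasFDerivAt (fun y => ((f y : ℝ) : ℂ))
      (Complex.ofRealCLM.comp (fderiv ℝ f x)) x :=
    Complex.ofRealCLM.hasFDerivAt.comp x hf.hasFDerivAt
  rw [this.fderiv]; simp

lemma pdC_contDiff {f : Spt → ℂ} {n : ℕ} (hf : ContDiff ℝ (n + 1) f) (μ : Fin 4) :
    ContDiff ℝ n (fun y => pdC μ f y) := by
  unfold pdC
  exact (hf.fderiv_right (by norm_num)).clm_apply contDiff_const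

lemma pdR_contDiff {f : Spt → ℝ} {n : ℕ} (hf : ContDiff ℝ (n + 1) f) (μ : Fin 4) :
    ContDiff ℝ n (fun y => pdR μ f y) := by
  unfold pdR
  exact (hf.fderiv_right (by norm_num)).clm_apply contDiff_const

lemma pdC_symm {f : Spt → ℂ} (hf : ContDiff ℝ 3 f) (μ ν : Fin 4) (x : Spt) :
    pdC μ (fun y => pdC ν f y) x = pdC ν (fun y => pdC μ f y) x := by
  have hd : ContDiff ℝ 2 (fderiv ℝ f) := hf.fderiv_right (by norm_num)
  have h1 : ∀ (w v : Spt), fderiv ℝ (fun y => fderiv ℝ f y w) x v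
      = fderiv ℝ (fderiv ℝ f) x v w := by
    intro w v
    rw [fderiv_clm_apply (hd.differentiable (by norm_num) x) (differentiableAt_const w)]
    simp
  unfold pdC
  rw [h1, h1]
  exact (hf.contDiffAt.isSymmSndFDerivAt (by norm_num)) _ _

section main
variable (lam e m₀ : ℝ) (φ : Spt → ℂ) (A : Fin 4 → Spt → ℝ)

lemma dphi_contDiff (hφ : ContDiff ℝ 3 φ) (ν : Fin 4) :
    ContDiff ℝ 2 (fun y => pdC ν φ y) :=
  pdC_contDiff (n := 2) (hφ.of_le (by norm_num)) ν

lemma cVelUp_contDiffAt (hφ : ContDiff ℝ 3 φ) (hA : ∀ μ, ContDiff ℝ 2 (A μ))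
    (ν : Fin 4) {x : Spt} (hx : φ x ≠ 0) :
    ContDiffAt ℝ 2 (cVelUp lam e m₀ A φ ν) x := by
  unfold cVelUp
  apply ContDiffAt.add
  · simp only [div_eq_mul_inv]
    exact (contDiffAt_const.mul (contDiffAt_const.mul (dphi_contDiff φ hφ ν).contDiffAt)).mul
      (((hφ.of_le (by norm_num)).contDiffAt).inv hx)
  · exact contDiffAt_const.mul (contDiffAt_const.mul
      ((Complex.ofRealCLM.contDiff.comp (hA ν)).contDiffAt))

lemma cVelUp_diffAt (hφ : ContDiff ℝ 3 φ) (hA : ∀ μ, ContDiff ℝ 2 (A μ))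
    (ν : Fin 4) {x : Spt} (hx : φ x ≠ 0) :
    DifferentiableAt ℝ (cVelUp lam e m₀ A φ ν) x :=
  (cVelUp_contDiffAt lam e m₀ φ A hφ hA ν hx).differentiableAt (by norm_num)

lemma pdC_cVelUp_diffAt (hφ : ContDiff ℝ 3 φ) (hA : ∀ μ, ContDiff ℝ 2 (A μ))
    (ν' ν : Fin 4) {x : Spt} (hx : φ x ≠ 0) :
    DifferentiableAt ℝ (fun y => pdC ν' (cVelUp lam e m₀ A φ ν) y) x := by
  have h := ((cVelUp_contDiffAt lam e m₀ φ A hφ hA ν hx).fderiv_right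
    (m := 1) (by norm_num)).clm_apply (contDiffAt_const (c := Pi.single ν' (1:ℝ)))
  exact h.differentiableAt one_ne_zero

lemma FupL_contDiff (hA : ∀ μ, ContDiff ℝ 2 (A μ)) (μ ν : Fin 4) :
    ContDiff ℝ 1 (fun y => ((FupL A μ ν y : ℝ) : ℂ)) := by
  unfold FupL
  exact Complex.ofRealCLM.contDiff.comp
    (contDiff_const.mul ((pdR_contDiff (n := 1) (hA ν) μ).sub (pdR_contDiff (n := 1) (hA μ) ν)))

lemma pdC_cVelUp (hφ : ContDiff ℝ 3 φ) (hA : ∀ μ, ContDiff ℝ 2 (A μ))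
    (μ ν : Fin 4) {x : Spt} (hx : φ x ≠ 0) :
    pdC μ (cVelUp lam e m₀ A φ ν) x
      = I * (lam : ℂ) ^ 2 * (η ν : ℂ) *
          ((pdC μ (fun y => pdC ν φ y) x * φ x - pdC ν φ x * pdC μ φ x) / φ x ^ 2)
        + ((e / m₀ : ℝ) : ℂ) * (η ν : ℂ) * ((pdR μ (A ν) x : ℝ) : ℂ) := by
  have hdφ : DifferentiableAt ℝ (fun y => pdC ν φ y) x :=
    ((dphi_contDiff φ hφ ν).differentiable (by norm_num)) x
  have hφd : DifferentiableAt ℝ φ x := (hφ.differentiable (by norm_num)) x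
  have hdφ' : DifferentiableAt ℝ (fun y => (η ν : ℂ) * pdC ν φ y) x := hdφ.const_mul _
  have hnum : DifferentiableAt ℝ (fun y => I * (lam : ℂ) ^ 2 * ((η ν : ℂ) * pdC ν φ y)) x :=
    hdφ'.const_mul _
  have hAd : DifferentiableAt ℝ (A ν) x := ((hA ν).differentiable (by norm_num)) x
  have hAc : DifferentiableAt ℝ (fun y => ((A ν y : ℝ) : ℂ)) x :=
    Complex.ofRealCLM.differentiableAt.comp x hAd
  have hdiv : DifferentiableAt ℝ
      (fun y => (I * (lam : ℂ) ^ 2 * ((η ν : ℂ) * pdC ν φ y)) / φ y) x := by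
    simp only [div_eq_mul_inv]; exact hnum.mul (hφd.inv hx)
  rw [show cVelUp lam e m₀ A φ ν
      = fun y => (I * (lam : ℂ) ^ 2 * ((η ν : ℂ) * pdC ν φ y)) / φ y
          + ((e / m₀ : ℝ) : ℂ) * ((η ν : ℂ) * ((A ν y : ℝ) : ℂ)) by funext y; rfl]
  rw [pdC_add hdiv ((hAc.const_mul _).const_mul _) μ]
  rw [pdC_div hnum hφd hx μ]
  rw [pdC_const_mul hdφ' (I * (lam : ℂ) ^ 2) μ]
  rw [pdC_const_mul hdφ ((η ν : ℂ)) μ]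
  rw [pdC_const_mul (hAc.const_mul _) (((e / m₀ : ℝ) : ℂ)) μ]
  rw [pdC_const_mul hAc ((η ν : ℂ)) μ]
  rw [pdC_ofReal hAd μ]
  ring

lemma keyS (hφ : ContDiff ℝ 3 φ) (hA : ∀ μ, ContDiff ℝ 2 (A μ))
    (μ ν : Fin 4) {x : Spt} (hx : φ x ≠ 0) :
    (η μ : ℂ) * pdC μ (cVelUp lam e m₀ A φ ν) x
      = (η ν : ℂ) * pdC ν (cVelUp lam e m₀ A φ μ) x
        + ((e / m₀ : ℝ) : ℂ) * ((FupL A μ ν x : ℝ) : ℂ) := by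
  rw [pdC_cVelUp lam e m₀ φ A hφ hA μ ν hx, pdC_cVelUp lam e m₀ φ A hφ hA ν μ hx,
    pdC_symm hφ ν μ x]
  unfold FupL
  push_cast
  field_simp
  ring

end main

/-- **Key algebraic identity of the stochastic equation of motion**:
`𝔇_τ𝒱^μ + (e/m₀)𝒱̂_νF^{μν} = 𝒱̂_ν∂^μ𝒱^ν` wherever `φ ≠ 0`. -/
theorem key_identity_stochastic_eom
    (lam e m₀ : ℝ) (hlam : 0 < lam) (he : 0 < e) (hm : 0 < m₀)
    (φ : Spt → ℂ) (hφ : ContDiff ℝ 3 φ)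
    (A : Fin 4 → Spt → ℝ) (hA : ∀ μ, ContDiff ℝ 2 (A μ)) :
    ∀ (μ : Fin 4) (x : Spt), φ x ≠ 0 →
      Dtau lam e m₀ A φ (cVelUp lam e m₀ A φ μ) x
        + ((e / m₀ : ℝ) : ℂ) *
            hatContr lam e m₀ A φ (fun ν y => ((FupL A μ ν y : ℝ) : ℂ)) x
      = hatContr lam e m₀ A φ
          (fun ν y => (η μ : ℂ) * pdC μ (cVelUp lam e m₀ A φ ν) y) x := by
  intro μ x hx
  unfold Dtau hatContr boxC
  rw [Finset.mul_sum, Finset.mul_sum, ← Finset.sum_add_distrib, ← Finset.sum_add_distrib]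
  refine Finset.sum_congr rfl fun ν _ => ?_
  simp only []
  have hev : (fun y => (η μ : ℂ) * pdC μ (cVelUp lam e m₀ A φ ν) y) =ᶠ[nhds x]
      (fun y => (η ν : ℂ) * pdC ν (cVelUp lam e m₀ A φ μ) y
        + ((e / m₀ : ℝ) : ℂ) * ((FupL A μ ν y : ℝ) : ℂ)) := by
    filter_upwards [hφ.continuous.continuousAt.eventually_ne hx] with y hy
    exact keyS lam e m₀ φ A hφ hA μ ν hy
  have hdV : DifferentiableAt ℝ (fun y => pdC ν (cVelUp lam e m₀ A φ μ) y) x :=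
    pdC_cVelUp_diffAt lam e m₀ φ A hφ hA ν μ hx
  have hF : DifferentiableAt ℝ (fun y => ((FupL A μ ν y : ℝ) : ℂ)) x :=
    ((FupL_contDiff A hA μ ν).differentiable one_ne_zero) x
  have hS' : pdC ν (fun y => (η μ : ℂ) * pdC μ (cVelUp lam e m₀ A φ ν) y) x
      = (η ν : ℂ) * pdC ν (fun y => pdC ν (cVelUp lam e m₀ A φ μ) y) x
        + ((e / m₀ : ℝ) : ℂ) * pdC ν (fun y => ((FupL A μ ν y : ℝ) : ℂ)) x := by
    rw [pdC_congr hev ν, pdC_add (hdV.const_mul _) (hF.const_mul _) ν,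
      pdC_const_mul hdV _ ν, pdC_const_mul hF _ ν]
  have hS := keyS lam e m₀ φ A hφ hA μ ν hx
  have hη : (η ν : ℂ) * (η ν : ℂ) = 1 := by
    rw [← Complex.ofReal_mul, eta_sq ν, Complex.ofReal_one]
  rw [hS', hS]
  linear_combination (-(cVelUp lam e m₀ A φ ν x * pdC ν (cVelUp lam e m₀ A φ μ) x)) * hη
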